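/- Let M = (V, D) be a delta-matroid and v ∈ V with d_M = d_{M*v}. Then (1) no inclusion-minimal set of M contains v, (2) the family of inclusion-minimal sets of M equals the family of inclusion-minimal sets of M*v, and (3) d_{M∂v} = d_M + 1. -/
import Mathlib


open scoped symmDiff

variable {V : Type*} [DecidableEq V] [Fintype V]

/-- Distance from `X` to the set system with family `D`. -/
noncomputable def dSS (D : Set (Finset V)) (X : Finset V) : ℕ :=
  sInf ((fun Y => (X ∆ Y).card) '' D)

/-- Pivot (twist) of a set-system family on `X`. -/
def pivotSS (D : Set (Finset V)) (X : Finset V) : Set (Finset V) :=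
  (fun Y => Y ∆ X) '' D

/-- Loop complementation on `v`. -/
def lcSS (D : Set (Finset V)) (v : V) : Set (Finset V) :=
  D ∆ ((fun Z => Z ∪ {v}) '' {Z ∈ D | v ∉ Z})

/-- Dual pivot on `v`. -/
def dpSS (D : Set (Finset V)) (v : V) : Set (Finset V) :=
  D ∆ ((fun Z => Z \ {v}) '' {Z ∈ D | v ∈ Z})

/-- Delta-matroid: proper set system with the symmetric exchange axiom. -/
def DeltaMatroid (D : Set (Finset V)) : Prop :=
  D.Nonempty ∧ ∀ X ∈ D, ∀ Y ∈ D, ∀ u ∈ X ∆ Y, ∃ v ∈ X ∆ Y, X ∆ {u, v} ∈ D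

/-- Inclusion-minimal members. -/
def minFam (D : Set (Finset V)) : Set (Finset V) :=
  {X ∈ D | ∀ Y ∈ D, Y ⊆ X → Y = X}

/-- Inclusion-maximal members. -/
def maxFam (D : Set (Finset V)) : Set (Finset V) :=
  {X ∈ D | ∀ Y ∈ D, X ⊆ Y → Y = X}

/-- Members of minimum cardinality. -/
def minCardFam (D : Set (Finset V)) : Set (Finset V) :=
  {X ∈ D | ∀ Y ∈ D, X.card ≤ Y.card}

/-- Members of maximum cardinality. -/
def maxCardFam (D : Set (Finset V)) : Set (Finset V) :=
  {X ∈ D | ∀ Y ∈ D, Y.card ≤ X.card}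

/-- All members have the same cardinality. -/
def Equicardinal (F : Set (Finset V)) : Prop :=
  ∀ X ∈ F, ∀ Y ∈ F, X.card = Y.card

/-- Restriction of the family to subsets of `X`. -/
def restrictSS (D : Set (Finset V)) (X : Finset V) : Set (Finset V) :=
  {Y ∈ D | Y ⊆ X}


/-! ### Auxiliary lemmas -/

section Aux

lemma sd_pair_in {S : Finset V} {u w : V} (hu : u ∈ S) (hw : w ∈ S) :
    S ∆ ({u, w} : Finset V) = S \ {u, w} := by
  ext x; by_cases hxu : x = u <;> by_cases hxw : x = w <;>
    simp [Finset.mem_symmDiff, hxu, hxw, hu, hw] <;> simp_all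

lemma sd_in_out {S : Finset V} {u w : V} (hu : u ∈ S) (hw : w ∉ S) :
    S ∆ ({u, w} : Finset V) = insert w (S.erase u) := by
  ext x; by_cases hxu : x = u <;> by_cases hxw : x = w <;>
    simp [Finset.mem_symmDiff, hxu, hxw, hu, hw] <;> simp_all

lemma sd_single_in {S : Finset V} {u : V} (hu : u ∈ S) :
    S ∆ ({u} : Finset V) = S.erase u := by
  ext x; by_cases hxu : x = u <;> simp [Finset.mem_symmDiff, hxu, hu]

lemma sd_single_out {S : Finset V} {u : V} (hu : u ∉ S) :
    S ∆ ({u} : Finset V) = insert u S := by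
  ext x; by_cases hxu : x = u <;> simp [Finset.mem_symmDiff, hxu, hu]

lemma sd_pair_right {A B : Finset V} {u w : V} (hu : u ∈ A ∆ B) (hw : w ∈ A ∆ B) :
    (A ∆ {u, w}) ∆ B = (A ∆ B) \ {u, w} := by
  rw [symmDiff_assoc, symmDiff_comm ({u,w} : Finset V) B, ← symmDiff_assoc, sd_pair_in hu hw]

lemma card_sd_in_out {S : Finset V} {u w : V} (hu : u ∈ S) (hw : w ∉ S) :
    (S ∆ ({u, w} : Finset V)).card = S.card := by
  rw [sd_in_out hu hw, Finset.card_insert_of_notMem (by simp [hw]),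
    Finset.card_erase_of_mem hu]
  have := Finset.card_pos.mpr ⟨u, hu⟩; omega

lemma sdiff_pair_card_lt {S : Finset V} {u : V} (hu : u ∈ S) (w : V) :
    (S \ {u, w}).card < S.card := by
  apply Finset.card_lt_card
  exact ⟨Finset.sdiff_subset, fun hsub => by have := hsub hu; simp at this⟩

lemma sd_cancel (A T : Finset V) : (A ∆ T) ∆ T = A := by
  rw [symmDiff_assoc, symmDiff_self, symmDiff_bot]

lemma sd_sd (A B T : Finset V) : (A ∆ T) ∆ (B ∆ T) = A ∆ B := by
  rw [symmDiff_comm B T, ← symmDiff_assoc, symmDiff_assoc A T T, symmDiff_self, symmDiff_bot]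

lemma mem_pivot {D : Set (Finset V)} {T X : Finset V} : X ∈ pivotSS D T ↔ X ∆ T ∈ D := by
  constructor
  · rintro ⟨W, hW, rfl⟩; rwa [sd_cancel]
  · intro hX; exact ⟨X ∆ T, hX, sd_cancel X T⟩

lemma pivot_dm {D : Set (Finset V)} (hDM : DeltaMatroid D) (T : Finset V) :
    DeltaMatroid (pivotSS D T) := by
  refine ⟨hDM.1.image _, ?_⟩
  intro X' hX' Y' hY' u hu
  rw [mem_pivot] at hX' hY'
  have hXY : (X' ∆ T) ∆ (Y' ∆ T) = X' ∆ Y' := sd_sd X' Y' T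
  obtain ⟨w, hw, hmem⟩ := hDM.2 (X' ∆ T) hX' (Y' ∆ T) hY' u (by rwa [hXY])
  rw [hXY] at hw
  refine ⟨w, hw, mem_pivot.mpr ?_⟩
  rwa [symmDiff_right_comm]

lemma dSS_empty_eq (E : Set (Finset V)) : dSS E ∅ = sInf (Finset.card '' E) := by
  have hf : (fun Y : Finset V => (((∅ : Finset V)) ∆ Y).card) = Finset.card := by
    funext Y
    rw [show ((∅ : Finset V)) ∆ Y = Y by simp]
  rw [dSS, hf]

/-- In a delta-matroid, if some member is smaller than `X`,
then `X` properly contains a member. -/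
lemma dm_exists_smaller_subset {D : Set (Finset V)} (hDM : DeltaMatroid D) :
    ∀ (n : ℕ) (X : Finset V), X ∈ D → ∀ Y ∈ D, Y.card < X.card → (X ∆ Y).card ≤ n →
      ∃ W ∈ D, W ⊆ X ∧ W.card < X.card := by
  intro n
  induction n with
  | zero =>
    intro X hX Y hY hcard hdiff
    have hXY : X = Y := by
      have h0 : X ∆ Y = ∅ := Finset.card_eq_zero.mp (Nat.le_zero.mp hdiff)
      simpa [symmDiff_eq_bot] using h0
    rw [hXY] at hcard; omega
  | succ n ih =>
    intro X hX Y hY hcard hdiff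
    have hXY : ¬ X ⊆ Y := fun hs => absurd (Finset.card_le_card hs) (by omega)
    obtain ⟨u, huX, huY⟩ := Finset.not_subset.mp hXY
    have huXY : u ∈ X ∆ Y := Finset.mem_symmDiff.mpr (Or.inl ⟨huX, huY⟩)
    obtain ⟨w, hwXY, hZ⟩ := hDM.2 X hX Y hY u huXY
    by_cases hwX : w ∈ X
    · refine ⟨X ∆ {u, w}, hZ, ?_, ?_⟩
      · rw [sd_pair_in huX hwX]; exact Finset.sdiff_subset
      · rw [sd_pair_in huX hwX]; exact sdiff_pair_card_lt huX w
    · set Z := X ∆ {u, w} with hZdef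
      have hZeq : Z = insert w (X.erase u) := sd_in_out huX hwX
      have hZcard : Z.card = X.card := card_sd_in_out huX hwX
      have hZY : Z ∆ Y = (X ∆ Y) \ {u, w} := sd_pair_right huXY hwXY
      have hdec : (Z ∆ Y).card < (X ∆ Y).card := by
        rw [hZY]; exact sdiff_pair_card_lt huXY w
      obtain ⟨W, hW, hWZ, hWcard⟩ := ih Z hZ Y hY (by omega) (by omega)
      have hWsub : ∀ x ∈ W, x ≠ w → x ∈ X := by
        intro x hx hxw
        have hx' := hWZ hx; rw [hZeq] at hx'
        rcases Finset.mem_insert.mp hx' with h1 | h2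
        · exact absurd h1 hxw
        · exact Finset.mem_of_mem_erase h2
      by_cases hwW : w ∈ W
      · have hwWX : w ∈ W ∆ X := Finset.mem_symmDiff.mpr (Or.inl ⟨hwW, hwX⟩)
        obtain ⟨z, hzWX, hW2⟩ := hDM.2 W hW X hX w hwWX
        by_cases hzW : z ∈ W
        · have hzX : z ∉ X := by
            rcases Finset.mem_symmDiff.mp hzWX with ⟨_, h⟩ | ⟨_, h⟩
            · exact h
            · exact absurd hzW h
          have hzw : z = w := by
            by_contra hne; exact hzX (hWsub z hzW hne)
          subst hzw
          have hpair : ({z, z} : Finset V) = {z} := by simp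
          rw [hpair, sd_single_in hzW] at hW2
          refine ⟨W.erase z, hW2, ?_, ?_⟩
          · intro x hx
            exact hWsub x (Finset.mem_of_mem_erase hx) (Finset.ne_of_mem_erase hx)
          · have := Finset.card_erase_of_mem hzW
            have := Finset.card_pos.mpr ⟨z, hzW⟩
            omega
        · refine ⟨W ∆ {w, z}, hW2, ?_, ?_⟩
          · rw [sd_in_out hwW hzW]
            intro x hx
            rcases Finset.mem_insert.mp hx with rfl | h2
            · rcases Finset.mem_symmDiff.mp hzWX with ⟨h, _⟩ | ⟨h, _⟩
              · exact absurd h hzW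
              · exact h
            · exact hWsub x (Finset.mem_of_mem_erase h2) (Finset.ne_of_mem_erase h2)
          · rw [card_sd_in_out hwW hzW]; omega
      · exact ⟨W, hW, fun x hx => hWsub x hx (fun h => hwW (h ▸ hx)), by omega⟩

/-- In a delta-matroid, the inclusion-minimal members are exactly the
minimum-cardinality members. -/
lemma minFam_eq_card {D : Set (Finset V)} (hDM : DeltaMatroid D) :
    minFam D = {X ∈ D | X.card = sInf (Finset.card '' D)} := by
  have hne : (Finset.card '' D).Nonempty := hDM.1.image _
  obtain ⟨Y, hY, hYc⟩ := Nat.sInf_mem hne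
  have dlow : ∀ X ∈ D, sInf (Finset.card '' D) ≤ X.card :=
    fun X hX => Nat.sInf_le ⟨X, hX, rfl⟩
  ext X
  constructor
  · rintro ⟨hX, hmin⟩
    refine ⟨hX, ?_⟩
    by_contra hne'
    have hlt : sInf (Finset.card '' D) < X.card := lt_of_le_of_ne (dlow X hX) (Ne.symm hne')
    obtain ⟨W, hW, hWX, hWc⟩ :=
      dm_exists_smaller_subset hDM ((X ∆ Y).card) X hX Y hY (by omega) le_rfl
    have := hmin W hW hWX
    rw [this] at hWc; omega
  · rintro ⟨hX, hXc⟩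
    refine ⟨hX, fun Z hZ hZX => ?_⟩
    exact Finset.eq_of_subset_of_card_le hZX (by have := dlow Z hZ; omega)

lemma claimR {D : Set (Finset V)} (hDM : DeltaMatroid D) {v : V} {d : ℕ}
    (dlow : ∀ Y ∈ D, d ≤ Y.card) (dv : ∀ Y ∈ D, v ∈ Y → d + 1 ≤ Y.card) :
    ∀ (n : ℕ) (Y' : Finset V), Y' ∈ D → v ∈ Y' → Y'.card = d + 1 →
      ∀ Y ∈ D, v ∉ Y → Y.card = d → (Y' ∆ insert v Y).card ≤ n → insert v Y ∈ D := by
  intro n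
  induction n with
  | zero =>
    intro Y' hY' hvY' hY'c Y hY hvY hYc hdiff
    have hYY : Y' = insert v Y := by
      have h0 : Y' ∆ insert v Y = ∅ := Finset.card_eq_zero.mp (Nat.le_zero.mp hdiff)
      simpa [symmDiff_eq_bot] using h0
    exact hYY ▸ hY'
  | succ n ih =>
    intro Y' hY' hvY' hY'c Y hY hvY hYc hdiff
    by_cases heq : Y' = insert v Y
    · exact heq ▸ hY'
    have hcardins : (insert v Y).card = d + 1 := by
      rw [Finset.card_insert_of_notMem hvY, hYc]
    have hnotsub : ¬ Y' ⊆ insert v Y := fun hs =>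
      heq (Finset.eq_of_subset_of_card_le hs (by omega))
    obtain ⟨u, huY', huI⟩ := Finset.not_subset.mp hnotsub
    have huv : u ≠ v := fun hh => huI (hh ▸ Finset.mem_insert_self v Y)
    have huY : u ∉ Y := fun hh => huI (Finset.mem_insert_of_mem hh)
    have huYY : u ∈ Y' ∆ Y := Finset.mem_symmDiff.mpr (Or.inl ⟨huY', huY⟩)
    obtain ⟨w, hwYY, hZ⟩ := hDM.2 Y' hY' Y hY u huYY
    by_cases hwY' : w ∈ Y'
    · exfalso
      rw [sd_pair_in huY' hwY'] at hZ
      by_cases hwu : w = u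
      · subst hwu
        have hvZ : v ∈ Y' \ ({w, w} : Finset V) := by
          rw [Finset.mem_sdiff]
          exact ⟨hvY', by simp [Ne.symm huv]⟩
        have hcZ : (Y' \ ({w, w} : Finset V)).card = d := by
          have : (Y' \ ({w, w} : Finset V)) = Y'.erase w := by
            rw [show ({w, w} : Finset V) = {w} by simp, Finset.sdiff_singleton_eq_erase]
          rw [this, Finset.card_erase_of_mem huY', hY'c]
          omega
        have := dv _ hZ hvZ
        omega
      · have hsub : ({u, w} : Finset V) ⊆ Y' := by
          intro x hx
          rcases Finset.mem_insert.mp hx with rfl | hx'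
          · exact huY'
          · rw [Finset.mem_singleton] at hx'; exact hx' ▸ hwY'
        have hc2 : ({u, w} : Finset V).card = 2 := Finset.card_pair (fun hh => hwu hh.symm)
        have hle : 2 ≤ Y'.card := hc2 ▸ Finset.card_le_card hsub
        have hcZ : (Y' \ ({u, w} : Finset V)).card = Y'.card - 2 := by
          rw [Finset.card_sdiff_of_subset hsub, hc2]
        have := dlow _ hZ
        omega
    · have hwY : w ∈ Y := by
        rcases Finset.mem_symmDiff.mp hwYY with ⟨h, _⟩ | ⟨h, _⟩
        · exact absurd h hwY'
        · exact h
      have hwv : w ≠ v := fun hh => hvY (hh ▸ hwY)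
      have hvZ : v ∈ Y' ∆ {u, w} := by
        rw [sd_in_out huY' hwY']
        exact Finset.mem_insert_of_mem (Finset.mem_erase.mpr ⟨Ne.symm huv, hvY'⟩)
      have hZc : (Y' ∆ {u, w}).card = d + 1 := by rw [card_sd_in_out huY' hwY', hY'c]
      have huI' : u ∈ Y' ∆ insert v Y := Finset.mem_symmDiff.mpr (Or.inl ⟨huY', huI⟩)
      have hwI : w ∈ Y' ∆ insert v Y :=
        Finset.mem_symmDiff.mpr (Or.inr ⟨Finset.mem_insert_of_mem hwY, hwY'⟩)
      have hZI : (Y' ∆ {u, w}) ∆ insert v Y = (Y' ∆ insert v Y) \ {u, w} :=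
        sd_pair_right huI' hwI
      have hdec : ((Y' ∆ {u, w}) ∆ insert v Y).card < (Y' ∆ insert v Y).card := by
        rw [hZI]; exact sdiff_pair_card_lt huI' w
      exact ih (Y' ∆ {u, w}) hZ hvZ hZc Y hY hvY hYc (by omega)

lemma claimQ {D : Set (Finset V)} (hDM : DeltaMatroid D) {v : V} {d : ℕ}
    (dlow : ∀ Y ∈ D, d ≤ Y.card) (dv : ∀ Y ∈ D, v ∈ Y → d + 1 ≤ Y.card) :
    ∀ (n : ℕ) (Y : Finset V), Y ∈ D → v ∉ Y → Y.card = d →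
      ∀ Y' ∈ D, v ∈ Y' → Y'.card = d + 1 → (Y ∆ Y'.erase v).card ≤ n → Y'.erase v ∈ D := by
  intro n
  induction n with
  | zero =>
    intro Y hY hvY hYc Y' hY' hvY' hY'c hdiff
    have hYY : Y = Y'.erase v := by
      have h0 : Y ∆ Y'.erase v = ∅ := Finset.card_eq_zero.mp (Nat.le_zero.mp hdiff)
      simpa [symmDiff_eq_bot] using h0
    exact hYY ▸ hY
  | succ n ih =>
    intro Y hY hvY hYc Y' hY' hvY' hY'c hdiff
    by_cases heq : Y = Y'.erase v
    · exact heq ▸ hY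
    have hcerase : (Y'.erase v).card = d := by
      rw [Finset.card_erase_of_mem hvY', hY'c]
      omega
    have hnotsub : ¬ Y ⊆ Y'.erase v := fun hs =>
      heq (Finset.eq_of_subset_of_card_le hs (by omega))
    obtain ⟨u, huY, huE⟩ := Finset.not_subset.mp hnotsub
    have huv : u ≠ v := fun hh => hvY (hh ▸ huY)
    have huY' : u ∉ Y' := fun hh => huE (Finset.mem_erase.mpr ⟨huv, hh⟩)
    have huYY : u ∈ Y ∆ Y' := Finset.mem_symmDiff.mpr (Or.inl ⟨huY, huY'⟩)
    obtain ⟨w, hwYY, hZ⟩ := hDM.2 Y hY Y' hY' u huYY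
    by_cases hwY : w ∈ Y
    · exfalso
      rw [sd_pair_in huY hwY] at hZ
      have := dlow _ hZ
      have := sdiff_pair_card_lt huY w
      omega
    · have hwY' : w ∈ Y' := by
        rcases Finset.mem_symmDiff.mp hwYY with ⟨h, _⟩ | ⟨h, _⟩
        · exact absurd h hwY
        · exact h
      have hZc : (Y ∆ {u, w}).card = d := by rw [card_sd_in_out huY hwY, hYc]
      by_cases hwv : w = v
      · exfalso
        have hvZ : v ∈ Y ∆ {u, w} := by
          rw [sd_in_out huY hwY]
          exact hwv ▸ Finset.mem_insert_self w _
        have := dv _ hZ hvZ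
        omega
      · have hvZ : v ∉ Y ∆ {u, w} := by
          rw [sd_in_out huY hwY]
          intro hh
          rcases Finset.mem_insert.mp hh with h1 | h2
          · exact hwv h1.symm
          · exact hvY (Finset.mem_of_mem_erase h2)
        have huI : u ∈ Y ∆ Y'.erase v := Finset.mem_symmDiff.mpr (Or.inl ⟨huY, huE⟩)
        have hwI : w ∈ Y ∆ Y'.erase v :=
          Finset.mem_symmDiff.mpr (Or.inr ⟨Finset.mem_erase.mpr ⟨hwv, hwY'⟩, hwY⟩)
        have hZI : (Y ∆ {u, w}) ∆ Y'.erase v = (Y ∆ Y'.erase v) \ {u, w} :=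
          sd_pair_right huI hwI
        have hdec : ((Y ∆ {u, w}) ∆ Y'.erase v).card < (Y ∆ Y'.erase v).card := by
          rw [hZI]; exact sdiff_pair_card_lt huI w
        exact ih (Y ∆ {u, w}) hZ hvZ hZc Y' hY' hvY' hY'c (by omega)

end Aux

/-- for a delta-matroid `M` and `v` with `d_M = d_{M*v}`:
(1) no inclusion-minimal set of `M` contains `v`,
(2) `min(M) = min(M*v)`, and (3) `d_{M∂v} = d_M + 1`. -/
theorem min_dual_pivot_equal_dist (D : Set (Finset V)) (hDM : DeltaMatroid D)
    (v : V) (h : dSS D ∅ = dSS (pivotSS D {v}) ∅) :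
    (∀ Z ∈ minFam D, v ∉ Z) ∧
    minFam D = minFam (pivotSS D {v}) ∧
    dSS (dpSS D v) ∅ = dSS D ∅ + 1 := by
  classical
  have hDM' : DeltaMatroid (pivotSS D {v}) := pivot_dm hDM ({v} : Finset V)
  rw [dSS_empty_eq, dSS_empty_eq] at h
  rw [dSS_empty_eq (dpSS D v), dSS_empty_eq D]
  set D' := pivotSS D ({v} : Finset V) with hD'
  set d := sInf (Finset.card '' D) with hd
  have dlow : ∀ Y ∈ D, d ≤ Y.card := fun Y hY => Nat.sInf_le ⟨Y, hY, rfl⟩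
  have dlow' : ∀ X ∈ D', d ≤ X.card := by
    intro X hX
    rw [h]
    exact Nat.sInf_le ⟨X, hX, rfl⟩
  have dv : ∀ Y ∈ D, v ∈ Y → d + 1 ≤ Y.card := by
    intro Y hY hvY
    have hmem : Y ∆ ({v} : Finset V) ∈ D' := ⟨Y, hY, rfl⟩
    have h1 := dlow' _ hmem
    rw [sd_single_in hvY, Finset.card_erase_of_mem hvY] at h1
    have h2 := Finset.card_pos.mpr ⟨v, hvY⟩
    omega
  obtain ⟨Y₀, hY₀, hY₀c⟩ := Nat.sInf_mem (hDM.1.image Finset.card)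
  rw [← hd] at hY₀c
  have hvY₀ : v ∉ Y₀ := fun hh => by have := dv Y₀ hY₀ hh; omega
  obtain ⟨X₁, hX₁D', hX₁c⟩ := Nat.sInf_mem (hDM'.1.image Finset.card)
  rw [← h] at hX₁c
  have hY₁ : ∃ Y₁ ∈ D, v ∈ Y₁ ∧ Y₁.card = d + 1 := by
    obtain ⟨W, hW, rfl⟩ := hX₁D'
    change (W ∆ ({v} : Finset V)).card = d at hX₁c
    by_cases hvW : v ∈ W
    · refine ⟨W, hW, hvW, ?_⟩
      rw [sd_single_in hvW, Finset.card_erase_of_mem hvW] at hX₁c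
      have := Finset.card_pos.mpr ⟨v, hvW⟩
      omega
    · exfalso
      rw [sd_single_out hvW, Finset.card_insert_of_notMem hvW] at hX₁c
      have := dlow W hW
      omega
  obtain ⟨Y₁, hY₁D, hvY₁, hY₁c⟩ := hY₁
  have R : ∀ Y ∈ D, v ∉ Y → Y.card = d → insert v Y ∈ D := fun Y hY hvY hYc =>
    claimR hDM dlow dv _ Y₁ hY₁D hvY₁ hY₁c Y hY hvY hYc le_rfl
  have Q : ∀ Y' ∈ D, v ∈ Y' → Y'.card = d + 1 → Y'.erase v ∈ D := fun Y' hY' hvY' hY'c =>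
    claimQ hDM dlow dv _ Y₀ hY₀ hvY₀ hY₀c Y' hY' hvY' hY'c le_rfl
  have hminD : minFam D = {X ∈ D | X.card = d} := by
    rw [minFam_eq_card hDM, ← hd]
  have hminD' : minFam D' = {X ∈ D' | X.card = d} := by
    rw [minFam_eq_card hDM', ← h]
  refine ⟨?_, ?_, ?_⟩
  · intro Z hZ hvZ
    rw [hminD] at hZ
    obtain ⟨hZD, hZc⟩ := hZ
    have := dv Z hZD hvZ
    omega
  · rw [hminD, hminD']
    ext X
    constructor
    · rintro ⟨hX, hXc⟩
      have hvX : v ∉ X := fun hh => by have := dv X hX hh; omega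
      refine ⟨mem_pivot.mpr ?_, hXc⟩
      rw [sd_single_out hvX]
      exact R X hX hvX hXc
    · rintro ⟨hX', hXc⟩
      obtain ⟨W, hW, rfl⟩ := hX'
      change (W ∆ ({v} : Finset V)).card = d at hXc
      show W ∆ ({v} : Finset V) ∈ {X | X ∈ D ∧ X.card = d}
      by_cases hvW : v ∈ W
      · rw [sd_single_in hvW] at hXc ⊢
        rw [Finset.card_erase_of_mem hvW] at hXc
        have hpos := Finset.card_pos.mpr ⟨v, hvW⟩
        have hWc : W.card = d + 1 := by omega
        refine ⟨Q W hW hvW hWc, ?_⟩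
        rw [Finset.card_erase_of_mem hvW, hWc]
        omega
      · exfalso
        rw [sd_single_out hvW, Finset.card_insert_of_notMem hvW] at hXc
        have := dlow W hW
        omega
  · set Efam := (fun Z : Finset V => Z \ {v}) '' {Z ∈ D | v ∈ Z} with hEfam
    have hdp : dpSS D v = D ∆ Efam := rfl
    have hEnov : ∀ X ∈ Efam, v ∉ X := by
      rintro X ⟨Z, hZ, rfl⟩
      simp
    have hY₁mem : Y₁ ∈ dpSS D v := by
      rw [hdp]
      exact Set.mem_symmDiff.mpr (Or.inl ⟨hY₁D, fun hh => hEnov Y₁ hh hvY₁⟩)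
    have hlb : ∀ X ∈ dpSS D v, d + 1 ≤ X.card := by
      intro X hX
      rw [hdp] at hX
      rcases Set.mem_symmDiff.mp hX with ⟨hXD, hXE⟩ | ⟨hXE, hXD⟩
      · by_cases hvX : v ∈ X
        · exact dv X hXD hvX
        · rcases eq_or_lt_of_le (dlow X hXD) with heq | hlt
          · exfalso
            refine hXE ⟨insert v X, ⟨R X hXD hvX heq.symm, Finset.mem_insert_self v X⟩, ?_⟩
            show (insert v X) \ {v} = X
            rw [Finset.sdiff_singleton_eq_erase, Finset.erase_insert hvX]
          · omega
      · obtain ⟨Z, ⟨hZD, hvZ⟩, rfl⟩ := hXE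
        change Z \ {v} ∉ D at hXD
        show d + 1 ≤ (Z \ {v}).card
        rw [Finset.sdiff_singleton_eq_erase]
        rw [Finset.sdiff_singleton_eq_erase] at hXD
        have hZlow := dv Z hZD hvZ
        have hce : (Z.erase v).card = Z.card - 1 := Finset.card_erase_of_mem hvZ
        rcases eq_or_lt_of_le hZlow with heq | hlt
        · exact absurd (Q Z hZD hvZ heq.symm) hXD
        · omega
    have hnedp : (Finset.card '' dpSS D v).Nonempty := ⟨Y₁.card, Y₁, hY₁mem, rfl⟩
    obtain ⟨M, hM, hMc⟩ := Nat.sInf_mem hnedp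
    have h1 : sInf (Finset.card '' dpSS D v) ≤ d + 1 := Nat.sInf_le ⟨Y₁, hY₁mem, hY₁c⟩
    have h2 := hlb M hM
    omega
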